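/- Let C = (x_0, y_0, x_1, y_1, …, x_{c−1}, y_{c−1}) be an alternating cycle of a graph G, and let T be an unweighted tree whose vertex set contains V(C) (with the vertices of C among its leaves). Then T can satisfy C if and only if there exists an edge e of T that belongs to strictly more negative paths than positive paths with respect to C. -/

import Mathlib

open SimpleGraph

namespace LeafPaper

/-- A leaf of a graph: a vertex with exactly one neighbor. -/
def IsLeaf {W : Type} (T : SimpleGraph W) (w : W) : Prop := ∃! u, T.Adj w u

/-- The edge list of the (unique, if `T` is a tree) path between `x` and `y`. -/
noncomputable def treePathEdges {W : Type} (T : SimpleGraph W) (x y : W) :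
    List (Sym2 W) := by
  classical
  exact if h : T.Reachable x y then (Classical.choice h).bypass.edges else []

/-- The weighted distance between `x` and `y` in a tree `T` with edge weighting `f`:
the sum of the weights of the edges on the (unique) path between `x` and `y`. -/
noncomputable def wdist {W : Type} (T : SimpleGraph W) (f : Sym2 W → ℕ) (x y : W) : ℕ :=
  ((treePathEdges T x y).map f).sum

/-- `(T, f)` is a leaf root of `G` with threshold `k`, where `ι` identifies the
vertices of `G` with the leaves of `T`. -/
def IsLeafRoot {V W : Type} (G : SimpleGraph V) (T : SimpleGraph W) (ι : V → W)
    (f : Sym2 W → ℕ) (k : ℕ) : Prop :=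
  T.IsTree ∧ Function.Injective ι ∧ (∀ w : W, IsLeaf T w ↔ w ∈ Set.range ι) ∧
    (∀ e ∈ T.edgeSet, 0 < f e) ∧
    ∀ u v : V, u ≠ v → (G.Adj u v ↔ wdist T f (ι u) (ι v) ≤ k)

/-- An unweighted tree `T` is an unweighted leaf root of `G` if some positive
integer weighting of its edges makes it a leaf root of `G`. -/
def IsUnweightedLeafRoot {V W : Type} (G : SimpleGraph V) (T : SimpleGraph W)
    (ι : V → W) : Prop :=
  ∃ (f : Sym2 W → ℕ) (k : ℕ), IsLeafRoot G T ι f k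

/-- `G` is a leaf power: there are a finite tree `T` whose leaf set is exactly `V(G)`
and a positive threshold `k` such that distinct vertices are adjacent in `G` iff their
tree distance is at most `k`. -/
def IsLeafPower {V : Type} (G : SimpleGraph V) : Prop :=
  ∃ (W : Type) (T : SimpleGraph W) (ι : V → W) (k : ℕ),
    Finite W ∧ T.IsTree ∧ Function.Injective ι ∧
      (∀ w : W, IsLeaf T w ↔ w ∈ Set.range ι) ∧ 0 < k ∧
      ∀ u v : V, u ≠ v → (G.Adj u v ↔ T.dist (ι u) (ι v) ≤ k)

/-- An alternating cycle `(x 0, y 0, x 1, y 1, …)` of `G`: `2c` distinct vertices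
such that `x i y i` is an edge and `y i x (i+1)` is a non-edge (indices mod `c`). -/
def IsAltCycle {V : Type} (G : SimpleGraph V) (c : ℕ) (x y : ZMod c → V) : Prop :=
  2 ≤ c ∧ Function.Injective (Sum.elim x y) ∧
    ∀ i : ZMod c, G.Adj (x i) (y i) ∧ ¬ G.Adj (y i) (x (i + 1))

/-- The weighted tree `(T, f)` satisfies the alternating cycle given by `x, y`
with threshold `k`. -/
def Satisfies {V W : Type} (T : SimpleGraph W) (f : Sym2 W → ℕ) (ι : V → W)
    (c : ℕ) (x y : ZMod c → V) (k : ℕ) : Prop :=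
  ∀ i : ZMod c, wdist T f (ι (x i)) (ι (y i)) ≤ k ∧
    k < wdist T f (ι (y i)) (ι (x (i + 1)))

/-- The unweighted tree `T` can satisfy the alternating cycle given by `x, y`. -/
def CanSatisfy {V W : Type} (T : SimpleGraph W) (ι : V → W) (c : ℕ)
    (x y : ZMod c → V) : Prop :=
  ∃ (f : Sym2 W → ℕ) (k : ℕ), (∀ e ∈ T.edgeSet, 0 < f e) ∧ Satisfies T f ι c x y k

/-- `T` contains the quartet `ab|cd`: the four vertices are distinct leaves of `T` and
the path between `a` and `b` is vertex-disjoint from the path between `c` and `d`. -/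
def ContainsQuartet {W : Type} (T : SimpleGraph W) (a b c d : W) : Prop :=
  IsLeaf T a ∧ IsLeaf T b ∧ IsLeaf T c ∧ IsLeaf T d ∧ a ≠ b ∧ c ≠ d ∧
    ∀ (p : T.Walk a b) (p' : T.Walk c d), p.IsPath → p'.IsPath →
      ∀ w : W, w ∈ p.support → w ∉ p'.support


section Aux

theorem sum_range_zmod {M : Type*} [AddCommMonoid M] {c:ℕ} [NeZero c] (g : ZMod c → M) :
    ∑ s ∈ Finset.range c, g (s : ZMod c) = ∑ i : ZMod c, g i := by
  refine Finset.sum_nbij' (fun s => (s : ZMod c)) (fun i => i.val) ?_ ?_ ?_ ?_ ?_ <;> intros a ha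
  · exact Finset.mem_univ _
  · simpa [Finset.mem_range] using ZMod.val_lt a
  · simpa [Finset.mem_range] using ZMod.val_cast_of_lt (Finset.mem_range.mp ha)
  · exact ZMod.natCast_rightInverse a
  · rfl

theorem cyclic_potentials {c : ℕ} [NeZero c] (d : ZMod c → ℤ) (hD : 0 ≤ ∑ i : ZMod c, d i) :
    ∃ a : ZMod c → ℕ, ∀ i : ZMod c, (a i : ℤ) ≤ a (i + 1) + d i := by
  classical
  have hc : 0 < c := Nat.pos_of_ne_zero (NeZero.ne c)
  set B : ZMod c → ℕ → ℤ := fun j t => -(∑ s ∈ Finset.range t, d (j - 1 - (s : ZMod c))) with hB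
  have hne : ∀ j : ZMod c, ((Finset.range c).image (B j)).Nonempty :=
    fun j => ⟨B j 0, Finset.mem_image_of_mem _ (Finset.mem_range.mpr hc)⟩
  set α : ZMod c → ℤ := fun j => ((Finset.range c).image (B j)).max' (hne j) with hα
  have hα0 : ∀ j, 0 ≤ α j := by
    intro j
    have : B j 0 ∈ (Finset.range c).image (B j) := Finset.mem_image_of_mem _ (Finset.mem_range.mpr hc)
    have := Finset.le_max' _ _ this
    simpa [hB] using this
  have hαle : ∀ j t, t ∈ Finset.range c → B j t ≤ α j := fun j t ht =>
    Finset.le_max' _ _ (Finset.mem_image_of_mem _ ht)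
  have key : ∀ j : ZMod c, α j ≤ α (j + 1) + d j := by
    intro j
    obtain ⟨t, ht, hBt⟩ := Finset.mem_image.mp (Finset.max'_mem _ (hne j))
    have hj : α j = B j t := hBt.symm
    rw [hj]
    rw [Finset.mem_range] at ht
    rcases lt_or_eq_of_le (Nat.succ_le_of_lt ht) with h1 | h1
    · have hmem : B (j+1) (t+1) ≤ α (j+1) := hαle _ _ (Finset.mem_range.mpr h1)
      have hrec : B j t = B (j + 1) (t + 1) + d j := by
        have hterm : ∀ s : ℕ, (j + 1) - 1 - ((s+1 : ℕ) : ZMod c) = j - 1 - (s : ZMod c) := by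
          intro s; push_cast; ring
        have hzero : (j + 1) - 1 - ((0 : ℕ) : ZMod c) = j := by push_cast; ring
        simp only [hB, Finset.sum_range_succ']
        rw [Finset.sum_congr rfl fun s _ => congrArg d (hterm s), hzero]
        ring
      rw [hrec]
      linarith
    · have hfull : ∑ s ∈ Finset.range c, d (j - 1 - (s:ZMod c)) = ∑ i : ZMod c, d i := by
        rw [sum_range_zmod (fun i => d (j - 1 - i))]
        exact Fintype.sum_equiv (Equiv.subLeft (j-1)) _ _ (fun i => rfl)
      have : B j t = d j - ∑ i : ZMod c, d i := by
        have h2 : t = c - 1 := by omega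
        have h1' : c = t + 1 := by omega
        have h4 : j - 1 - (t : ℕ) = j := by
          have h5 : ((t : ℕ) : ZMod c) = ((c : ℕ) : ZMod c) - 1 := by
            rw [h2, Nat.cast_sub (by omega : 1 ≤ c)]; push_cast; ring
          rw [h5, ZMod.natCast_self]; ring
        have h6 : ∑ i : ZMod c, d i = ∑ s ∈ Finset.range t, d (j - 1 - (s : ZMod c)) + d j := by
          rw [← hfull, show Finset.range c = Finset.range (t+1) from by rw [h1'], Finset.sum_range_succ, h4]
        simp only [hB]
        linarith
      rw [this]
      have := hα0 (j + 1)
      linarith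
  exact ⟨fun j => (α j).toNat, fun i => by
    rw [Int.toNat_of_nonneg (hα0 i), Int.toNat_of_nonneg (hα0 (i+1))]
    exact key i⟩

variable {W : Type} {T : SimpleGraph W}

theorem exists_path_treePathEdges {u v : W} (h : T.Reachable u v) :
    ∃ p : T.Walk u v, p.IsPath ∧ treePathEdges T u v = p.edges := by
  classical
  refine ⟨(Classical.choice h).bypass, Walk.bypass_isPath _, ?_⟩
  unfold treePathEdges
  rw [dif_pos h]

theorem leaf_eq_of_mem_support {w : W} (hw : IsLeaf T w) {u v : W} (p : T.Walk u v)
    (hp : p.IsPath) (hm : w ∈ p.support) : w = u ∨ w = v := by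
  induction p with
  | nil => simp at hm; exact Or.inl hm
  | @cons a b v' hab q ih =>
    rw [Walk.support_cons, List.mem_cons] at hm
    rcases hm with rfl | hm
    · exact Or.inl rfl
    · rcases ih (hp.of_cons) hm with rfl | rfl
      · cases q with
        | nil => exact Or.inr rfl
        | @cons _ c2 _ hbc r =>
          exfalso
          obtain ⟨n, hn, hun⟩ := hw
          have h1 : a = n := hun a hab.symm
          have h2 : c2 = n := hun c2 hbc
          have hc2 : c2 ∈ (Walk.cons hbc r).support := by
            rw [Walk.support_cons]
            exact List.mem_cons_of_mem _ (Walk.start_mem_support r)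
          have : a ∉ (Walk.cons hbc r).support := ((Walk.cons_isPath_iff hab _).mp hp).2
          rw [h1, ← h2] at this
          exact this hc2
      · exact Or.inr rfl

theorem pendant_mem_edges_left {w n v : W} (hw : IsLeaf T w) (hn : T.Adj w n)
    (p : T.Walk w v) (hne : w ≠ v) : s(w, n) ∈ p.edges := by
  cases p with
  | nil => exact absurd rfl hne
  | @cons _ b _ hab q =>
    obtain ⟨m, _, hum⟩ := hw
    have hb : b = n := (hum _ hab).trans (hum _ hn).symm
    rw [Walk.edges_cons, ← hb]
    exact List.mem_cons_self

theorem pendant_mem_edges {w n u v : W} (hw : IsLeaf T w) (hn : T.Adj w n)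
    {p : T.Walk u v} (hp : p.IsPath) (huv : u ≠ v) :
    s(w, n) ∈ p.edges ↔ (w = u ∨ w = v) := by
  constructor
  · intro h
    exact leaf_eq_of_mem_support hw p hp (Walk.fst_mem_support_of_mem_edges p h)
  · rintro (rfl | rfl)
    · exact pendant_mem_edges_left hw hn p huv
    · have := pendant_mem_edges_left hw hn p.reverse huv.symm
      rwa [Walk.edges_reverse, List.mem_reverse] at this

theorem sum_weight [DecidableEq W] {c : ℕ} [NeZero c] (M : ℕ) (e : Sym2 W) (a b : ZMod c → ℕ)
    (px py : ZMod c → Sym2 W) (l : List (Sym2 W)) (hnd : l.Nodup) :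
    (l.map (fun e' => 1 + M * (if e' = e then 1 else 0) +
        ∑ i : ZMod c, (a i * (if e' = px i then 1 else 0) + b i * (if e' = py i then 1 else 0)))).sum
      = l.length + M * (if e ∈ l then 1 else 0) +
        ∑ i : ZMod c, (a i * (if px i ∈ l then 1 else 0) + b i * (if py i ∈ l then 1 else 0)) := by
  rw [← List.sum_toFinset _ hnd]
  rw [Finset.sum_add_distrib, Finset.sum_add_distrib]
  congr 1
  · congr 1
    · simp [List.toFinset_card_of_nodup hnd]
    · rw [← Finset.mul_sum]
      congr 1
      rw [Finset.sum_ite_eq' l.toFinset e (fun _ => 1)]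
      simp
  · rw [Finset.sum_comm]
    refine Finset.sum_congr rfl fun i _ => ?_
    rw [Finset.sum_add_distrib, ← Finset.mul_sum, ← Finset.mul_sum,
      Finset.sum_ite_eq' l.toFinset (px i) (fun _ => 1),
      Finset.sum_ite_eq' l.toFinset (py i) (fun _ => 1)]
    simp

end Aux

/-- an unweighted tree `T` whose vertex set contains the vertices of an
alternating cycle `C` of `G` (with the vertices of `C` being leaves of `T`) can
satisfy `C` iff some edge of `T` lies on strictly more negative paths than positive
paths with respect to `C`. -/
theorem stmt_5 {V W : Type} [Fintype V] [Fintype W] (G : SimpleGraph V)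
    (T : SimpleGraph W) (hT : T.IsTree) (ι : V → W) (hι : Function.Injective ι)
    (c : ℕ) (x y : ZMod c → V) (hC : IsAltCycle G c x y)
    (hleaf : ∀ i : ZMod c, IsLeaf T (ι (x i)) ∧ IsLeaf T (ι (y i))) :
    CanSatisfy T ι c x y ↔
      ∃ e ∈ T.edgeSet,
        Nat.card {i : ZMod c // e ∈ treePathEdges T (ι (x i)) (ι (y i))} <
          Nat.card {i : ZMod c // e ∈ treePathEdges T (ι (y i)) (ι (x (i + 1)))} := by
  classical
  obtain ⟨hc2, hinj, _⟩ := hC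
  haveI : NeZero c := ⟨by omega⟩
  -- injectivity facts
  have hxy : ∀ i j : ZMod c, x i ≠ y j := by
    intro i j h
    have := hinj (show Sum.elim x y (Sum.inl i) = Sum.elim x y (Sum.inr j) from h)
    simp at this
  have hx : ∀ i j : ZMod c, x i = x j → i = j := by
    intro i j h
    have := hinj (show Sum.elim x y (Sum.inl i) = Sum.elim x y (Sum.inl j) from h)
    simpa using this
  have hy : ∀ i j : ZMod c, y i = y j → i = j := by
    intro i j h
    have := hinj (show Sum.elim x y (Sum.inr i) = Sum.elim x y (Sum.inr j) from h)
    simpa using this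
  -- paths
  have hreach : ∀ u v : W, T.Reachable u v := fun u v => hT.isConnected.preconnected u v
  choose pp hpp hppe using fun i : ZMod c =>
    exists_path_treePathEdges (T := T) (hreach (ι (x i)) (ι (y i)))
  choose pn hpn hpne using fun i : ZMod c =>
    exists_path_treePathEdges (T := T) (hreach (ι (y i)) (ι (x (i+1))))
  have hndp : ∀ i, (treePathEdges T (ι (x i)) (ι (y i))).Nodup := fun i => by
    rw [hppe i]; exact (hpp i).edges_nodup
  have hndn : ∀ i, (treePathEdges T (ι (y i)) (ι (x (i+1)))).Nodup := fun i => by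
    rw [hpne i]; exact (hpn i).edges_nodup
  have hsubp : ∀ i, ∀ e' ∈ treePathEdges T (ι (x i)) (ι (y i)), e' ∈ T.edgeSet := fun i e' h => by
    rw [hppe i] at h; exact (pp i).edges_subset_edgeSet h
  have hsubn : ∀ i, ∀ e' ∈ treePathEdges T (ι (y i)) (ι (x (i+1))), e' ∈ T.edgeSet := fun i e' h => by
    rw [hpne i] at h; exact (pn i).edges_subset_edgeSet h
  have hcard : ∀ (p : ZMod c → Prop), Nat.card {i // p i} = ∑ i : ZMod c, if p i then 1 else 0 := by
    intro p
    rw [Nat.card_eq_fintype_card, Fintype.card_subtype, Finset.card_filter]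
  -- endpoint distinctness
  have hppne : ∀ i : ZMod c, ι (x i) ≠ ι (y i) := fun i h => hxy i i (hι h)
  have hpnne : ∀ i : ZMod c, ι (y i) ≠ ι (x (i+1)) := fun i h => hxy (i+1) i (hι h).symm
  constructor
  · rintro ⟨f, k, hfpos, hsat⟩
    by_contra hcon
    push_neg at hcon
    have hw : ∀ (L : List (Sym2 W)), L.Nodup → (∀ e' ∈ L, e' ∈ T.edgeSet) →
        (L.map f).sum = ∑ e' ∈ T.edgeFinset, if e' ∈ L then f e' else 0 := by
      intro L hnd hsub
      have hsub' : L.toFinset ⊆ T.edgeFinset := fun e' h =>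
        mem_edgeFinset.mpr (hsub e' (List.mem_toFinset.mp h))
      rw [← List.sum_toFinset _ hnd]
      calc L.toFinset.sum f = ∑ e' ∈ T.edgeFinset ∩ L.toFinset, f e' := by
            rw [Finset.inter_eq_right.mpr hsub']
        _ = ∑ e' ∈ T.edgeFinset, if e' ∈ L.toFinset then f e' else 0 :=
            (Finset.sum_ite_mem _ _ _).symm
        _ = ∑ e' ∈ T.edgeFinset, if e' ∈ L then f e' else 0 := by
            simp only [List.mem_toFinset]
    have hswap : ∀ (L : ZMod c → List (Sym2 W)), (∀ i, (L i).Nodup) →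
        (∀ i, ∀ e' ∈ L i, e' ∈ T.edgeSet) →
        ∑ i : ZMod c, ((L i).map f).sum
          = ∑ e' ∈ T.edgeFinset, f e' * ∑ i : ZMod c, (if e' ∈ L i then 1 else 0) := by
      intro L hnd hsub
      rw [Finset.sum_congr rfl fun i _ => hw (L i) (hnd i) (hsub i)]
      rw [Finset.sum_comm]
      refine Finset.sum_congr rfl fun e' _ => ?_
      rw [Finset.mul_sum]
      exact Finset.sum_congr rfl fun i _ => by rw [mul_ite, mul_one, mul_zero]
    have hposSum : ∑ i : ZMod c, wdist T f (ι (x i)) (ι (y i)) ≤ c * k := by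
      calc ∑ i : ZMod c, wdist T f (ι (x i)) (ι (y i)) ≤ ∑ _i : ZMod c, k :=
            Finset.sum_le_sum fun i _ => (hsat i).1
        _ = c * k := by rw [Finset.sum_const, Finset.card_univ, ZMod.card, smul_eq_mul]
    have hnegSum : c * (k+1) ≤ ∑ i : ZMod c, wdist T f (ι (y i)) (ι (x (i+1))) := by
      calc c * (k+1) = ∑ _i : ZMod c, (k+1) := by
            rw [Finset.sum_const, Finset.card_univ, ZMod.card, smul_eq_mul]
        _ ≤ _ := Finset.sum_le_sum fun i _ => (hsat i).2
    have heq1 : ∑ i : ZMod c, wdist T f (ι (x i)) (ι (y i))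
        = ∑ e' ∈ T.edgeFinset, f e' * ∑ i : ZMod c,
            (if e' ∈ treePathEdges T (ι (x i)) (ι (y i)) then 1 else 0) := by
      simp only [wdist]
      exact hswap _ hndp hsubp
    have heq2 : ∑ i : ZMod c, wdist T f (ι (y i)) (ι (x (i+1)))
        = ∑ e' ∈ T.edgeFinset, f e' * ∑ i : ZMod c,
            (if e' ∈ treePathEdges T (ι (y i)) (ι (x (i+1))) then 1 else 0) := by
      simp only [wdist]
      exact hswap _ hndn hsubn
    have hle : ∑ i : ZMod c, wdist T f (ι (y i)) (ι (x (i+1)))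
        ≤ ∑ i : ZMod c, wdist T f (ι (x i)) (ι (y i)) := by
      rw [heq1, heq2]
      refine Finset.sum_le_sum fun e' he' => Nat.mul_le_mul_left _ ?_
      have := hcon e' (mem_edgeFinset.mp he')
      rw [hcard, hcard] at this
      convert this using 3
      rfl
    have : c * (k+1) ≤ c * k := le_trans hnegSum (le_trans hle hposSum)
    have := Nat.le_of_mul_le_mul_left this (by omega : 0 < c)
    omega
  · rintro ⟨e, he, hlt⟩
    rw [hcard, hcard] at hlt
    obtain ⟨P, hPdef⟩ : ∃ P : ZMod c → ℕ, ∀ i,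
        P i = (treePathEdges T (ι (x i)) (ι (y i))).length := ⟨_, fun _ => rfl⟩
    obtain ⟨Q, hQdef⟩ : ∃ Q : ZMod c → ℕ, ∀ i,
        Q i = (treePathEdges T (ι (y i)) (ι (x (i+1)))).length := ⟨_, fun _ => rfl⟩
    obtain ⟨A, hAdef⟩ : ∃ A : ZMod c → ℕ, ∀ i,
        A i = if e ∈ treePathEdges T (ι (x i)) (ι (y i)) then 1 else 0 := ⟨_, fun _ => rfl⟩
    obtain ⟨Bc, hBdef⟩ : ∃ Bc : ZMod c → ℕ, ∀ i,
        Bc i = if e ∈ treePathEdges T (ι (y i)) (ι (x (i+1))) then 1 else 0 := ⟨_, fun _ => rfl⟩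
    have hltAB : ∑ i : ZMod c, A i < ∑ i : ZMod c, Bc i := by
      rw [Finset.sum_congr rfl fun i _ => hAdef i, Finset.sum_congr rfl fun i _ => hBdef i]
      convert hlt using 3
    obtain ⟨M, hMdef⟩ : ∃ M : ℕ, M = (∑ i : ZMod c, P i) + c := ⟨_, rfl⟩
    obtain ⟨d, hddef⟩ : ∃ d : ZMod c → ℤ, ∀ i,
        d i = ((Q i : ℤ) + (M : ℤ) * (Bc i : ℤ)) - ((P i : ℤ) + (M : ℤ) * (A i : ℤ)) - 1 :=
      ⟨_, fun _ => rfl⟩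
    have hD : 0 ≤ ∑ i : ZMod c, d i := by
      have hAB : ((∑ i : ZMod c, A i : ℕ) : ℤ) + 1 ≤ ((∑ i : ZMod c, Bc i : ℕ) : ℤ) := by
        exact_mod_cast hltAB
      have hsum : ∑ i : ZMod c, d i
          = ((∑ i : ZMod c, Q i : ℕ) : ℤ) + (M : ℤ) * ((∑ i : ZMod c, Bc i : ℕ) : ℤ)
            - ((∑ i : ZMod c, P i : ℕ) : ℤ) - (M : ℤ) * ((∑ i : ZMod c, A i : ℕ) : ℤ) - (c : ℤ) := by
        rw [Finset.sum_congr rfl fun i _ => hddef i]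
        push_cast
        rw [Finset.sum_sub_distrib, Finset.sum_sub_distrib, Finset.sum_add_distrib,
          Finset.sum_add_distrib, ← Finset.mul_sum, ← Finset.mul_sum,
          Finset.sum_const, Finset.card_univ, ZMod.card, nsmul_eq_mul]
        ring
      rw [hsum]
      have hMQ : (M : ℤ) = ((∑ i : ZMod c, P i : ℕ) : ℤ) + (c : ℤ) := by
        rw [hMdef]; push_cast; ring
      have hQ0 : (0 : ℤ) ≤ ((∑ i : ZMod c, Q i : ℕ) : ℤ) := by positivity
      nlinarith [hMQ, hQ0, hAB]
    obtain ⟨a, ha⟩ := cyclic_potentials d hD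
    have hstar : ∀ i : ZMod c, P i + M * A i + a i < Q i + M * Bc i + a (i+1) := by
      intro i
      have h := ha i
      rw [hddef i] at h
      have : ((P i + M * A i + a i : ℕ) : ℤ) < ((Q i + M * Bc i + a (i+1) : ℕ) : ℤ) := by
        push_cast
        linarith
      exact_mod_cast this
    obtain ⟨k, hsk⟩ : ∃ k : ℕ, ∀ i : ZMod c, P i + M * A i + a i ≤ k :=
      ⟨Finset.univ.sup (fun i => P i + M * A i + a i),
        fun i => Finset.le_sup (f := fun i => P i + M * A i + a i) (Finset.mem_univ i)⟩
    obtain ⟨b, hbdef⟩ : ∃ b : ZMod c → ℕ, ∀ i,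
        b i = k - (P i + M * A i + a i) := ⟨_, fun _ => rfl⟩
    have hbi : ∀ i, (P i + M * A i + a i) + b i = k := fun i => by
      rw [hbdef i]; exact Nat.add_sub_cancel' (hsk i)
    -- pendant neighbors
    choose nx hnx using fun i : ZMod c => (hleaf i).1
    choose ny hny using fun i : ZMod c => (hleaf i).2
    -- membership characterizations
    have hpxpos : ∀ i j : ZMod c,
        (s(ι (x i), nx i) ∈ treePathEdges T (ι (x j)) (ι (y j))) ↔ i = j := by
      intro i j
      rw [hppe j, pendant_mem_edges (hleaf i).1 (hnx i).1 (hpp j) (hppne j)]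
      constructor
      · rintro (h | h)
        · exact hx i j (hι h)
        · exact absurd (hι h) (hxy i j)
      · rintro rfl; exact Or.inl rfl
    have hpypos : ∀ i j : ZMod c,
        (s(ι (y i), ny i) ∈ treePathEdges T (ι (x j)) (ι (y j))) ↔ i = j := by
      intro i j
      rw [hppe j, pendant_mem_edges (hleaf i).2 (hny i).1 (hpp j) (hppne j)]
      constructor
      · rintro (h | h)
        · exact absurd (hι h).symm (hxy j i)
        · exact hy i j (hι h)
      · rintro rfl; exact Or.inr rfl
    have hpxneg : ∀ i j : ZMod c,
        (s(ι (x i), nx i) ∈ treePathEdges T (ι (y j)) (ι (x (j+1)))) ↔ i = j + 1 := by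
      intro i j
      rw [hpne j, pendant_mem_edges (hleaf i).1 (hnx i).1 (hpn j) (hpnne j)]
      constructor
      · rintro (h | h)
        · exact absurd (hι h) (hxy i j)
        · exact hx i (j+1) (hι h)
      · rintro rfl; exact Or.inr rfl
    have hpyneg : ∀ i j : ZMod c,
        (s(ι (y i), ny i) ∈ treePathEdges T (ι (y j)) (ι (x (j+1)))) ↔ i = j := by
      intro i j
      rw [hpne j, pendant_mem_edges (hleaf i).2 (hny i).1 (hpn j) (hpnne j)]
      constructor
      · rintro (h | h)
        · exact hy i j (hι h)
        · exact absurd (hι h) (hxy (j+1) i).symm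
      · rintro rfl; exact Or.inl rfl
    have hsum : ∀ (u : ZMod c → ℕ) (j : ZMod c),
        ∑ i' : ZMod c, u i' * (if i' = j then 1 else 0) = u j := by
      intro u j
      rw [Finset.sum_congr rfl fun i _ => by rw [mul_ite, mul_one, mul_zero]]
      rw [Finset.sum_ite_eq' Finset.univ j u]
      simp
    refine ⟨fun e' => 1 + M * (if e' = e then 1 else 0) +
        ∑ i : ZMod c, (a i * (if e' = s(ι (x i), nx i) then 1 else 0)
          + b i * (if e' = s(ι (y i), ny i) then 1 else 0)), k, fun e' _ => by positivity, ?_⟩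
    intro i
    constructor
    · simp only [wdist]
      rw [sum_weight M e a b _ _ _ (hndp i)]
      have h1 : ∀ i' : ZMod c,
          (if s(ι (x i'), nx i') ∈ treePathEdges T (ι (x i)) (ι (y i)) then (1:ℕ) else 0)
            = if i' = i then 1 else 0 := fun i' => if_congr (hpxpos i' i) rfl rfl
      have h2 : ∀ i' : ZMod c,
          (if s(ι (y i'), ny i') ∈ treePathEdges T (ι (x i)) (ι (y i)) then (1:ℕ) else 0)
            = if i' = i then 1 else 0 := fun i' => if_congr (hpypos i' i) rfl rfl
      simp only [h1, h2]
      rw [Finset.sum_add_distrib, hsum a i, hsum b i, ← hPdef i, ← hAdef i]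
      have := hbi i
      linarith
    · simp only [wdist]
      rw [sum_weight M e a b _ _ _ (hndn i)]
      have h1 : ∀ i' : ZMod c,
          (if s(ι (x i'), nx i') ∈ treePathEdges T (ι (y i)) (ι (x (i+1))) then (1:ℕ) else 0)
            = if i' = i + 1 then 1 else 0 := fun i' => if_congr (hpxneg i' i) rfl rfl
      have h2 : ∀ i' : ZMod c,
          (if s(ι (y i'), ny i') ∈ treePathEdges T (ι (y i)) (ι (x (i+1))) then (1:ℕ) else 0)
            = if i' = i then 1 else 0 := fun i' => if_congr (hpyneg i' i) rfl rfl
      simp only [h1, h2]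
      rw [Finset.sum_add_distrib, hsum a (i+1), hsum b i, ← hQdef i, ← hBdef i]
      have := hbi i
      have := hstar i
      linarith

end LeafPaper
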